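/- Suppose that for every t ≥ t₀ the map x ↦ g x t is differentiable on E, with Fréchet derivative Dg(x, t) : E →L[ℝ] E at each x. Then the following are equivalent: (i) ⟪v, P.mulVec (Dg(x, t) v)⟫ ≤ −γ̄(t) · ‖v‖_P² for all x, v ∈ E and all t ≥ t₀; (ii) g satisfies the one-sided Lipschitz condition with rate γ̄ (with respect to ‖·‖_P) on [t₀, ∞). -/

import Mathlib

/-- Weighted inner product `⟪u, P.mulVec v⟫` on Euclidean space. -/
noncomputable def wip {n : ℕ} (P : Matrix (Fin n) (Fin n) ℝ)
    (u v : EuclideanSpace ℝ (Fin n)) : ℝ :=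
  ∑ i, u i * P.mulVec (fun j => v j) i

/-- Weighted norm `‖u‖_P = √⟪u, u⟫_P`. -/
noncomputable def wnorm {n : ℕ} (P : Matrix (Fin n) (Fin n) ℝ)
    (u : EuclideanSpace ℝ (Fin n)) : ℝ :=
  Real.sqrt (wip P u u)

variable {n : ℕ}


noncomputable def wipCLM (P : Matrix (Fin n) (Fin n) ℝ) (u : EuclideanSpace ℝ (Fin n)) :
    EuclideanSpace ℝ (Fin n) →L[ℝ] ℝ :=
  innerSL ℝ ((WithLp.equiv 2 (Fin n → ℝ)).symm (P.transpose.mulVec (fun j => u j)))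

lemma wipCLM_apply (P : Matrix (Fin n) (Fin n) ℝ) (u v : EuclideanSpace ℝ (Fin n)) :
    wipCLM P u v = wip P u v := by
  simp only [wipCLM, innerSL_apply_apply, PiLp.inner_apply, RCLike.inner_apply, conj_trivial,
    wip, Matrix.mulVec, dotProduct, Matrix.transpose_apply, WithLp.equiv_symm_apply, PiLp.toLp_apply]
  simp only [Finset.sum_mul, Finset.mul_sum]
  rw [Finset.sum_comm]
  exact Finset.sum_congr rfl fun i _ => Finset.sum_congr rfl fun j _ => by ring

lemma wip_self_nonneg (P : Matrix (Fin n) (Fin n) ℝ) (hPpos : P.PosDef)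
    (u : EuclideanSpace ℝ (Fin n)) : 0 ≤ wip P u u := by
  have := hPpos.posSemidef.dotProduct_mulVec_nonneg (fun j => u j)
  simpa [wip, dotProduct] using this

lemma wnorm_sq (P : Matrix (Fin n) (Fin n) ℝ) (hPpos : P.PosDef)
    (u : EuclideanSpace ℝ (Fin n)) : wnorm P u ^ 2 = wip P u u :=
  Real.sq_sqrt (wip_self_nonneg P hPpos u)

lemma wip_smul_left (P : Matrix (Fin n) (Fin n) ℝ) (s : ℝ) (u v : EuclideanSpace ℝ (Fin n)) :
    wip P (s • u) v = s * wip P u v := by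
  simp [wip, Finset.mul_sum, mul_assoc]

lemma wip_sub_right (P : Matrix (Fin n) (Fin n) ℝ) (u v w : EuclideanSpace ℝ (Fin n)) :
    wip P u (v - w) = wip P u v - wip P u w := by
  rw [← wipCLM_apply, ← wipCLM_apply, ← wipCLM_apply, map_sub]

lemma wip_smul_right (P : Matrix (Fin n) (Fin n) ℝ) (s : ℝ) (u v : EuclideanSpace ℝ (Fin n)) :
    wip P u (s • v) = s * wip P u v := by
  rw [← wipCLM_apply, ← wipCLM_apply, map_smul]; rfl

lemma wip_zero_right (P : Matrix (Fin n) (Fin n) ℝ) (u : EuclideanSpace ℝ (Fin n)) :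
    wip P u 0 = 0 := by rw [← wipCLM_apply, map_zero]

theorem stmt_1 {n : ℕ} (P : Matrix (Fin n) (Fin n) ℝ)
    (hPsymm : P.IsSymm) (hPpos : P.PosDef)
    (g : EuclideanSpace ℝ (Fin n) → ℝ → EuclideanSpace ℝ (Fin n))
    (gam : ℝ → ℝ) (t₀ : ℝ)
    (Dg : EuclideanSpace ℝ (Fin n) → ℝ →
      (EuclideanSpace ℝ (Fin n) →L[ℝ] EuclideanSpace ℝ (Fin n)))
    (hDg : ∀ t : ℝ, t₀ ≤ t → ∀ x : EuclideanSpace ℝ (Fin n),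
      HasFDerivAt (fun z => g z t) (Dg x t) x) :
    ((∀ x v : EuclideanSpace ℝ (Fin n), ∀ t : ℝ, t₀ ≤ t →
        wip P v (Dg x t v) ≤ -gam t * (wnorm P v) ^ 2) ↔
      (∀ x y : EuclideanSpace ℝ (Fin n), ∀ t : ℝ, t₀ ≤ t →
        wip P (x - y) (g x t - g y t) ≤ -gam t * (wnorm P (x - y)) ^ 2)) := by
  constructor
  · intro h x y t ht
    set ψ : ℝ → ℝ := fun s => wip P (x - y) (g (y + s • (x - y)) t) with hψdef
    have hψ : ∀ s : ℝ, HasDerivAt ψ (wip P (x - y) (Dg (y + s • (x - y)) t (x - y))) s := by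
      intro s
      have hc : HasDerivAt (fun s : ℝ => y + s • (x - y)) (x - y) s := by
        simpa using ((hasDerivAt_id s).smul_const (x - y)).const_add y
      have hg := (hDg t ht (y + s • (x - y))).comp_hasDerivAt s hc
      have := ((wipCLM P (x - y)).hasFDerivAt.comp_hasDerivAt s hg)
      rw [wipCLM_apply] at this
      have hfun : ψ = (⇑(wipCLM P (x - y)) ∘ (fun z => g z t) ∘ fun s => y + s • (x - y)) := by
        funext s'; simp [hψdef, wipCLM_apply, Function.comp]
      rwa [hfun]
    obtain ⟨σ, hσ, heq⟩ := exists_hasDerivAt_eq_slope ψ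
        (fun s => wip P (x - y) (Dg (y + s • (x - y)) t (x - y))) zero_lt_one
        (fun s _ => (hψ s).continuousAt.continuousWithinAt)
        (fun s _ => hψ s)
    have hc1 : y + (1:ℝ) • (x - y) = x := by rw [one_smul]; abel
    have hc0 : y + (0:ℝ) • (x - y) = y := by rw [zero_smul, add_zero]
    have h10 : ψ 1 - ψ 0 = wip P (x - y) (g x t - g y t) := by
      simp only [hψdef]
      rw [hc1, hc0, wip_sub_right]
    have : wip P (x - y) (g x t - g y t) =
        wip P (x - y) (Dg (y + σ • (x - y)) t (x - y)) := by
      rw [heq, ← h10]; ring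
    rw [this]
    exact h (y + σ • (x - y)) (x - y) t ht
  · intro h x v t ht
    set h₁ : ℝ → ℝ := fun s => wip P v (g (x + s • v) t - g x t) with h₁def
    have hD : HasDerivAt h₁ (wip P v (Dg x t v)) 0 := by
      have hc : HasDerivAt (fun s : ℝ => x + s • v) v 0 := by
        simpa using ((hasDerivAt_id (0:ℝ)).smul_const v).const_add x
      have hx0 : x + (0:ℝ) • v = x := by simp
      have hfd : HasFDerivAt (fun z => g z t) (Dg x t) (x + (0:ℝ) • v) := by
        rw [hx0]; exact hDg t ht x
      have hg := hfd.comp_hasDerivAt 0 hc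
      have hg' := hg.sub_const (g x t)
      have := (wipCLM P v).hasFDerivAt.comp_hasDerivAt 0 hg'
      rw [wipCLM_apply] at this
      have hfun : h₁ = (⇑(wipCLM P v) ∘ fun s => g (x + s • v) t - g x t) := by
        funext s'; simp [h₁def, wipCLM_apply, Function.comp]
      rwa [hfun]
    have hslope := hasDerivAt_iff_tendsto_slope.mp hD
    have hslope' : Filter.Tendsto (slope h₁ 0) (nhdsWithin 0 (Set.Ioi 0))
        (nhds (wip P v (Dg x t v))) :=
      hslope.mono_left (nhdsWithin_mono 0 (fun s hs => ne_of_gt hs))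
    refine le_of_tendsto hslope' ?_
    filter_upwards [self_mem_nhdsWithin] with s hs
    have hspos : (0:ℝ) < s := hs
    have hosl := h (x + s • v) x t ht
    have hsub : (x + s • v) - x = s • v := by abel
    rw [hsub, wip_smul_left, wnorm_sq P hPpos, wip_smul_left, wip_smul_right] at hosl
    have h₁0 : h₁ 0 = 0 := by
      simp only [h₁def, zero_smul, add_zero, sub_self, wip_zero_right]
    have hval : h₁ s ≤ s * (-gam t * wnorm P v ^ 2) := by
      have : s * h₁ s ≤ s * (s * (-gam t * wnorm P v ^ 2)) := by
        rw [wnorm_sq P hPpos]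
        nlinarith [hosl]
      exact le_of_mul_le_mul_left this hspos
    rw [slope_def_field]
    have : (h₁ s - h₁ 0) / (s - 0) ≤ -gam t * wnorm P v ^ 2 := by
      rw [h₁0, sub_zero, sub_zero, div_le_iff₀ hspos]
      linarith [hval]
    simpa [div_eq_inv_mul, slope, h₁0] using this
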